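/- Let G = A * B be a free product and g ∈ G \ A. Then the subgroup of G generated by A and gAg⁻¹ is isomorphic to the free product A * (gAg⁻¹); in particular, if h₁,...,hₛ ∈ A are nontrivial elements and s ≥ 1, then any alternating product h₁ (g h₂ g⁻¹) h₃ (g h₄ g⁻¹) ⋯ with all factors nontrivial is a nontrivial element of G. -/

import Mathlib

open Monoid


namespace FPAux

universe u v

/-- The two-element family `true ↦ A`, `false ↦ B` (with `ULift` to equalize universes). -/
abbrev fab (A : Type u) (B : Type v) : Bool → Type (max u v) :=
  fun b => cond b (ULift.{v} A) (ULift.{u} B)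

/-- The constant family with value `A`. -/
abbrev faa (A : Type u) : Bool → Type u := fun _ => A

instance {A : Type u} {B : Type v} [Group A] [Group B] (b : Bool) : Group (fab A B b) := by
  cases b
  · exact (inferInstance : Group (ULift B))
  · exact (inferInstance : Group (ULift A))

instance {A : Type u} [Group A] (b : Bool) : Group (faa A b) := ‹Group A›

variable {A : Type u} {B : Type v} [Group A] [Group B]

abbrev upA : A →* fab A B true := (MulEquiv.ulift.symm : A ≃* ULift A).toMonoidHom
abbrev downA : fab A B true →* A := (MulEquiv.ulift : ULift A ≃* A).toMonoidHom
abbrev upB : B →* fab A B false := (MulEquiv.ulift.symm : B ≃* ULift B).toMonoidHom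
abbrev downB : fab A B false →* B := (MulEquiv.ulift : ULift B ≃* B).toMonoidHom

/-- `of` at `true` resp. `false`. -/
abbrev ofT : fab A B true →* CoprodI (fab A B) := CoprodI.of (M := fab A B) (i := true)
abbrev ofF : fab A B false →* CoprodI (fab A B) := CoprodI.of (M := fab A B) (i := false)
abbrev ofb (b : Bool) : A →* CoprodI (faa A) := CoprodI.of (M := faa A) (i := b)

/-- Inverse components for `eAB`. -/
def invAB : ∀ b, fab A B b →* Coprod A B
  | true => Coprod.inl.comp downA
  | false => Coprod.inr.comp downB

/-- Inverse components for `eAA`. -/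
def invAA : ∀ b, faa A b →* Coprod A A
  | true => Coprod.inl
  | false => Coprod.inr

def eAB : Coprod A B ≃* CoprodI (fab A B) :=
  MonoidHom.toMulEquiv
    (Coprod.lift (ofT.comp upA) (ofF.comp upB))
    (CoprodI.lift invAB)
    (by
      apply Coprod.hom_ext <;> ext x
      · show CoprodI.lift invAB (ofT (upA x)) = Coprod.inl x
        rw [CoprodI.lift_of]
        simp [invAB]
      · show CoprodI.lift invAB (ofF (upB x)) = Coprod.inr x
        rw [CoprodI.lift_of]
        simp [invAB])
    (by
      apply CoprodI.ext_hom
      intro i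
      cases i <;> ext x
      · show Coprod.lift (ofT.comp upA) (ofF.comp upB) (CoprodI.lift invAB (ofF x)) = ofF x
        rw [CoprodI.lift_of]
        simp [invAB]
      · show Coprod.lift (ofT.comp upA) (ofF.comp upB) (CoprodI.lift invAB (ofT x)) = ofT x
        rw [CoprodI.lift_of]
        simp [invAB])

def eAA : Coprod A A ≃* CoprodI (faa A) :=
  MonoidHom.toMulEquiv
    (Coprod.lift (ofb true) (ofb false))
    (CoprodI.lift invAA)
    (by
      apply Coprod.hom_ext <;> ext x
      · show CoprodI.lift invAA (ofb true x) = Coprod.inl x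
        rw [CoprodI.lift_of]
        simp [invAA]
      · show CoprodI.lift invAA (ofb false x) = Coprod.inr x
        rw [CoprodI.lift_of]
        simp [invAA])
    (by
      apply CoprodI.ext_hom
      intro i
      cases i <;> ext x
      · show Coprod.lift (ofb true) (ofb false) (CoprodI.lift invAA (ofb false x)) = ofb false x
        rw [CoprodI.lift_of]
        simp [invAA]
      · show Coprod.lift (ofb true) (ofb false) (CoprodI.lift invAA (ofb true x)) = ofb true x
        rw [CoprodI.lift_of]
        simp [invAA])

theorem word_eq_empty_of_prod_eq_one {ι : Type*} {H : ι → Type*} [∀ i, Group (H i)]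
    {w : CoprodI.Word H} (h : w.prod = 1) : w = CoprodI.Word.empty := by
  classical
  exact (CoprodI.Word.equiv (M := H)).symm.injective
    (h.trans (CoprodI.Word.prod_empty (M := H)).symm)

theorem neword_prod_ne_one {ι : Type*} {H : ι → Type*} [∀ i, Group (H i)]
    {i j : ι} (w : CoprodI.NeWord H i j) : w.prod ≠ 1 := by
  intro h
  have h2 : w.toWord = CoprodI.Word.empty := word_eq_empty_of_prod_eq_one h
  have h3 := congrArg CoprodI.Word.toList h2
  exact w.toList_ne_nil h3

/-- decomposition of an element not in the first factor -/
theorem exists_decomp (g : CoprodI (fab A B))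
    (hg : g ∉ (ofT (A := A) (B := B)).range) :
    ∃ (a c : fab A B true) (nw : CoprodI.NeWord (fab A B) false false),
      g = ofT a * nw.prod * ofT c := by
  classical
  have key : ∀ w : CoprodI.Word (fab A B),
      w.prod = 1 ∨
      (∃ a : fab A B true, w.prod = ofT a ∧ w.fstIdx = some true) ∨
      (∃ (nw : CoprodI.NeWord (fab A B) false false) (c : fab A B true),
        w.prod = nw.prod * ofT c ∧ w.fstIdx = some false) ∨
      (∃ (a : fab A B true) (_ : a ≠ 1) (nw : CoprodI.NeWord (fab A B) false false)
          (c : fab A B true),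
        w.prod = ofT a * nw.prod * ofT c ∧ w.fstIdx = some true) := by
    intro w
    induction w using CoprodI.Word.consRecOn with
    | empty => left; simp
    | cons i m w hidx hm ih =>
      cases i
      · -- i = false, m : ULift B
        rcases ih with h1 | ⟨a, hp, hfst⟩ | ⟨nw, c, hp, hfst⟩ | ⟨a, ha, nw, c, hp, hfst⟩
        · right; right; left
          refine ⟨.singleton m hm, 1, ?_, by simp⟩
          rw [CoprodI.Word.prod_cons, h1, CoprodI.NeWord.prod_singleton, map_one, mul_one]
        · right; right; left
          refine ⟨.singleton m hm, a, ?_, by simp⟩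
          rw [CoprodI.Word.prod_cons, hp, CoprodI.NeWord.prod_singleton]
        · exact absurd hfst hidx
        · right; right; left
          refine ⟨(CoprodI.NeWord.singleton m hm).append
              (show (false : Bool) ≠ true by simp)
              ((CoprodI.NeWord.singleton a ha).append
                (show (true : Bool) ≠ false by simp) nw), c, ?_, by simp⟩
          rw [CoprodI.Word.prod_cons, hp, CoprodI.NeWord.append_prod,
            CoprodI.NeWord.append_prod, CoprodI.NeWord.prod_singleton,
            CoprodI.NeWord.prod_singleton]
          simp [mul_assoc]
      · -- i = true, m : ULift A
        rcases ih with h1 | ⟨a, hp, hfst⟩ | ⟨nw, c, hp, hfst⟩ | ⟨a, ha, nw, c, hp, hfst⟩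
        · right; left
          refine ⟨m, ?_, by simp⟩
          rw [CoprodI.Word.prod_cons, h1, mul_one]
        · exact absurd hfst hidx
        · right; right; right
          refine ⟨m, hm, nw, c, ?_, by simp⟩
          rw [CoprodI.Word.prod_cons, hp, ← mul_assoc]
        · exact absurd hfst hidx
  have hw : (CoprodI.Word.equiv g).prod = g := (CoprodI.Word.equiv).symm_apply_apply g
  rcases key (CoprodI.Word.equiv g) with h1 | ⟨a, hp, _⟩ | ⟨nw, c, hp, _⟩ |
      ⟨a, _, nw, c, hp, _⟩
  · exact absurd ⟨1, by rw [map_one, ← hw, h1]⟩ hg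
  · exact absurd ⟨a, by rw [← hw, hp]⟩ hg
  · refine ⟨1, c, nw, ?_⟩
    rw [← hw, hp, map_one, one_mul]
  · exact ⟨a, c, nw, by rw [← hw, hp]⟩



theorem upA_ne_one {x : A} (hx : x ≠ 1) : (upA (B := B) x) ≠ 1 := by
  intro h
  exact hx (by simpa using congrArg (downA (A := A) (B := B)) h)

theorem lift_inj (g : CoprodI (fab A B)) (hg : g ∉ (ofT (A := A) (B := B)).range)
    (f : ∀ b : Bool, faa A b →* CoprodI (fab A B))
    (hft : f true = ofT.comp upA)
    (hff : f false = (MulAut.conj g).toMonoidHom.comp (ofT.comp upA)) :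
    Function.Injective (CoprodI.lift f) := by
  classical
  obtain ⟨a, c, nw, hgdef⟩ := exists_decomp g hg
  set f' : ∀ b : Bool, faa A b →* CoprodI (fab A B) := fun b =>
    match b with
    | true => ofT.comp (((MulAut.conj a⁻¹).toMonoidHom).comp upA)
    | false => ((MulAut.conj nw.prod).toMonoidHom).comp
        (ofT.comp (((MulAut.conj c).toMonoidHom).comp upA)) with hf'
  have hf't : ∀ x : A, CoprodI.lift f' (ofb true x) = ofT (MulAut.conj a⁻¹ (upA x)) := by
    intro x; rw [CoprodI.lift_of]; rfl
  have hf'f : ∀ x : A,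
      CoprodI.lift f' (ofb false x) =
        nw.prod * ofT (MulAut.conj c (upA x)) * nw.prod⁻¹ := by
    intro x; rw [CoprodI.lift_of]; simp [f', MulAut.conj_apply, mul_assoc]
  have hpsi : ∀ {i j : Bool} (w : CoprodI.NeWord (faa A) i j),
      ∃ w' : CoprodI.NeWord (fab A B) i j, w'.prod = CoprodI.lift f' w.prod := by
    intro i j w
    induction w with
    | singleton x hx =>
      rename_i i
      cases i
      · refine ⟨nw.append (show (false : Bool) ≠ true by simp)
            ((CoprodI.NeWord.singleton (M := fab A B) (i := true)
                (MulAut.conj c (upA x))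
                ((map_ne_one_iff _ (MulAut.conj c).injective).mpr (upA_ne_one hx))).append
              (show (true : Bool) ≠ false by simp) nw.inv), ?_⟩
        rw [CoprodI.NeWord.prod_singleton, hf'f, CoprodI.NeWord.append_prod,
          CoprodI.NeWord.append_prod, CoprodI.NeWord.prod_singleton,
          CoprodI.NeWord.inv_prod, mul_assoc]
      · refine ⟨.singleton (MulAut.conj a⁻¹ (upA x))
            ((map_ne_one_iff _ (MulAut.conj a⁻¹).injective).mpr (upA_ne_one hx)), ?_⟩
        rw [CoprodI.NeWord.prod_singleton, CoprodI.NeWord.prod_singleton, hf't]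
    | append w1 hne w2 ih1 ih2 =>
      obtain ⟨w1', h1⟩ := ih1
      obtain ⟨w2', h2⟩ := ih2
      exact ⟨w1'.append hne w2', by
        rw [CoprodI.NeWord.append_prod, CoprodI.NeWord.append_prod, map_mul, h1, h2]⟩
  have hinj' : Function.Injective (CoprodI.lift f') := by
    rw [injective_iff_map_eq_one]
    intro x hx
    by_contra hx1
    have hw : (CoprodI.Word.equiv x).prod = x := (CoprodI.Word.equiv).symm_apply_apply x
    have hne : CoprodI.Word.equiv x ≠ CoprodI.Word.empty := by
      intro h
      exact hx1 (by rw [← hw, h, CoprodI.Word.prod_empty])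
    obtain ⟨i, j, w', hw'⟩ := CoprodI.NeWord.of_word _ hne
    have hprod : w'.prod = x := by rw [CoprodI.NeWord.prod, hw', hw]
    obtain ⟨w'', hw''⟩ := hpsi w'
    exact neword_prod_ne_one w'' (by rw [hw'', hprod, hx])
  have hcomp : CoprodI.lift f =
      ((MulAut.conj (ofT (A := A) (B := B) a)).toMonoidHom).comp (CoprodI.lift f') := by
    apply CoprodI.ext_hom
    intro i
    cases i <;> ext x
    · show CoprodI.lift f (ofb false x) = MulAut.conj (ofT a) (CoprodI.lift f' (ofb false x))
      rw [CoprodI.lift_of, hff, hf'f, hgdef]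
      simp [MulAut.conj_apply, mul_assoc]
    · show CoprodI.lift f (ofb true x) = MulAut.conj (ofT a) (CoprodI.lift f' (ofb true x))
      rw [CoprodI.lift_of, hft, hf't]
      simp [MulAut.conj_apply, mul_assoc]
  rw [hcomp, MonoidHom.coe_comp]
  exact Function.Injective.comp (MulAut.conj (ofT a)).injective hinj'



theorem alt {A : Type u} [Group A] (s : ℕ) (cix : ℕ → Bool) (hc : ∀ n, cix (n + 1) = !cix n)
    (h : Fin (s + 1) → A) (hne : ∀ i, h i ≠ 1) :
    ∃ (j : Bool) (w : CoprodI.NeWord (faa A) (cix 0) j),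
      w.prod = (List.ofFn fun i : Fin (s + 1) => ofb (cix ↑i) (h i)).prod := by
  induction s generalizing cix with
  | zero =>
    refine ⟨cix 0, .singleton (h 0) (hne 0), ?_⟩
    simp [CoprodI.NeWord.prod_singleton, List.ofFn_succ]
  | succ s ih =>
    obtain ⟨j, w', hw'⟩ := ih (fun n => cix (n + 1)) (fun n => hc (n + 1))
      (fun i => h i.succ) (fun i => hne i.succ)
    refine ⟨j, (CoprodI.NeWord.singleton (M := faa A) (i := cix 0) (h 0) (hne 0)).append
        (by rw [show cix (0 + 1) = !cix 0 from hc 0]; cases cix 0 <;> decide)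
        w', ?_⟩
    rw [CoprodI.NeWord.append_prod, CoprodI.NeWord.prod_singleton, hw']
    conv_rhs => rw [List.ofFn_succ, List.prod_cons]
    rfl

end FPAux

open FPAux

/-- Let `G = A ∗ B` be a free product and `g ∈ G \ A`. Then the subgroup generated by `A`
and `gAg⁻¹` is isomorphic to the free product `A ∗ A` (the first factor corresponding to
`A` and the second to `gAg⁻¹`); in particular any alternating product
`h₁ (g h₂ g⁻¹) h₃ (g h₄ g⁻¹) ⋯` of nontrivial elements of `A` and of `gAg⁻¹` is a
nontrivial element of `G`. -/
theorem subgroup_generated_by_factor_and_conjugate (A B : Type*) [Group A] [Group B]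
    (g : Coprod A B) (hg : g ∉ (Coprod.inl : A →* Coprod A B).range) :
    Nonempty
      ((((Coprod.inl : A →* Coprod A B).range ⊔
          (Coprod.inl : A →* Coprod A B).range.map (MulAut.conj g).toMonoidHom :
            Subgroup (Coprod A B))) ≃* Coprod A A) ∧
    ∀ (s : ℕ), 1 ≤ s → ∀ h : Fin s → A, (∀ i, h i ≠ 1) →
      (List.ofFn (fun i : Fin s =>
        if (i : ℕ) % 2 = 1 then g * Coprod.inl (h i) * g⁻¹ else Coprod.inl (h i))).prod
        ≠ 1 := by
  classical
  set φ : Coprod A A →* Coprod A B :=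
    Coprod.lift Coprod.inl ((MulAut.conj g).toMonoidHom.comp Coprod.inl) with hφ
  set G : CoprodI (fab A B) := eAB g with hG
  have hGnot : G ∉ (ofT (A := A) (B := B)).range := by
    rintro ⟨x, hx⟩
    apply hg
    refine ⟨downA x, ?_⟩
    have h1 := congrArg (eAB (A := A) (B := B)).symm hx
    rw [hG, MulEquiv.symm_apply_apply] at h1
    rw [← h1]
    show CoprodI.lift invAB (ofT x) = _
    rw [CoprodI.lift_of]
    rfl
  set f : ∀ b, faa A b →* CoprodI (fab A B) := fun b =>
    match b with
    | true => ofT.comp upA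
    | false => (MulAut.conj G).toMonoidHom.comp (ofT.comp upA) with hf
  have hfinj : Function.Injective (CoprodI.lift f) := lift_inj G hGnot f rfl rfl
  have hrel : ∀ x : Coprod A A, eAB (φ x) = CoprodI.lift f (eAA x) := by
    have hh : (eAB.toMonoidHom.comp φ) = (CoprodI.lift f).comp eAA.toMonoidHom := by
      apply Coprod.hom_ext <;> ext y
      · show Coprod.lift (ofT.comp upA) (ofF.comp upB)
            (Coprod.lift Coprod.inl ((MulAut.conj g).toMonoidHom.comp Coprod.inl)
              (Coprod.inl y)) =
          CoprodI.lift f (Coprod.lift (ofb true) (ofb false) (Coprod.inl y))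
        rw [Coprod.lift_apply_inl, Coprod.lift_apply_inl, Coprod.lift_apply_inl,
          CoprodI.lift_of]
      · show Coprod.lift (ofT.comp upA) (ofF.comp upB)
            (Coprod.lift Coprod.inl ((MulAut.conj g).toMonoidHom.comp Coprod.inl)
              (Coprod.inr y)) =
          CoprodI.lift f (Coprod.lift (ofb true) (ofb false) (Coprod.inr y))
        rw [Coprod.lift_apply_inr, Coprod.lift_apply_inr, CoprodI.lift_of]
        show Coprod.lift (ofT.comp upA) (ofF.comp upB) (MulAut.conj g (Coprod.inl y)) =
          MulAut.conj G (ofT (upA y))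
        rw [MulAut.conj_apply, MulAut.conj_apply, map_mul, map_mul, map_inv, hG]
        rfl
    intro x
    exact DFunLike.congr_fun hh x
  have hφinj : Function.Injective φ := by
    intro x y hxy
    apply eAA.injective
    apply hfinj
    rw [← hrel, ← hrel, hxy]
  constructor
  · -- the isomorphism
    have hrange : ((Coprod.inl : A →* Coprod A B).range ⊔
        (Coprod.inl : A →* Coprod A B).range.map (MulAut.conj g).toMonoidHom) = φ.range := by
      rw [MonoidHom.map_range, hφ, Coprod.range_lift]
    exact ⟨(MulEquiv.subgroupCongr hrange).trans (MonoidHom.ofInjective hφinj).symm⟩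
  · intro s hs h hne
    obtain ⟨s', rfl⟩ : ∃ s', s = s' + 1 := ⟨s - 1, by omega⟩
    set L : List (Coprod A A) := List.ofFn (fun i : Fin (s' + 1) =>
      if (i : ℕ) % 2 = 1 then Coprod.inr (h i) else Coprod.inl (h i)) with hL
    have hmap : (List.ofFn fun i : Fin (s' + 1) =>
        if (i : ℕ) % 2 = 1 then g * Coprod.inl (h i) * g⁻¹ else Coprod.inl (h i))
        = List.map φ L := by
      rw [hL, List.map_ofFn]
      congr 1
      funext i
      by_cases hi : (i : ℕ) % 2 = 1 <;>
        simp [hi, hφ, Function.comp, Coprod.lift_apply_inl, Coprod.lift_apply_inr,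
          MulAut.conj_apply]
    rw [hmap, ← map_list_prod]
    intro hone
    have hL1 : L.prod = 1 := hφinj (by rw [hone, map_one])
    apply absurd hL1
    have hLne : eAA L.prod ≠ 1 → L.prod ≠ 1 := fun hh h1 => hh (by rw [h1, map_one])
    apply hLne
    rw [map_list_prod, hL, List.map_ofFn]
    set cix : ℕ → Bool := fun n => n % 2 == 0 with hcix
    have hc : ∀ n, cix (n + 1) = !cix n := by
      intro n
      rcases Nat.mod_two_eq_zero_or_one n with hn | hn <;>
        · have hn2 : (n + 1) % 2 = 1 - n % 2 := by omega
          simp [hcix, hn, hn2]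
    have hfn : ((eAA (A := A)) ∘ fun i : Fin (s' + 1) =>
          if (i : ℕ) % 2 = 1 then Coprod.inr (h i) else Coprod.inl (h i))
        = fun i : Fin (s' + 1) => ofb (cix ↑i) (h i) := by
      funext i
      rcases Nat.mod_two_eq_zero_or_one (i : ℕ) with hi | hi
      · have hcb : cix ↑i = true := by simp [hcix, hi]
        rw [Function.comp_apply, if_neg (by omega), hcb]
        show Coprod.lift (ofb true) (ofb false) (Coprod.inl (h i)) = ofb true (h i)
        rw [Coprod.lift_apply_inl]
      · have hcb : cix ↑i = false := by simp [hcix, hi]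
        rw [Function.comp_apply, if_pos hi, hcb]
        show Coprod.lift (ofb true) (ofb false) (Coprod.inr (h i)) = ofb false (h i)
        rw [Coprod.lift_apply_inr]
    rw [hfn]
    obtain ⟨j, w, hw⟩ := alt s' cix hc h hne
    rw [← hw]
    exact neword_prod_ne_one w
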